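/- For the dihedral group D_{2n} of order 2n with n even, D(D_{2n}) = σ(n) + 4n; consequently for even n, D_{2n} is never Leinster, quasi-Leinster, or almost Leinster. -/

import Mathlib

open DihedralGroup AddSubgroup

/-- Sum of the orders of all normal subgroups of `G`. -/
noncomputable def D (G : Type*) [Group G] : ℕ :=
  ∑ᶠ N ∈ {N : Subgroup G | N.Normal}, Nat.card N

namespace DihedralAux

variable {n : ℕ}

/-- Classification of additive subgroups of `ZMod n`. -/
theorem zmod_addSubgroup (hn : 0 < n) (H : AddSubgroup (ZMod n)) :
    ∃ d : ℕ, d ∣ n ∧ 0 < d ∧ H = zmultiples ((d : ℕ) : ZMod n) := by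
  set f := Int.castAddHom (ZMod n) with hf
  obtain ⟨a, ha⟩ := Int.subgroup_cyclic (H.comap f)
  have hcl : AddSubgroup.closure ({a} : Set ℤ) = zmultiples a := by
    rw [zmultiples_eq_closure]
  have hnmem : (n : ℤ) ∈ H.comap f := by
    simp only [AddSubgroup.mem_comap, hf, Int.coe_castAddHom, Int.cast_natCast,
      ZMod.natCast_self]
    exact H.zero_mem
  rw [ha, hcl] at hnmem
  obtain ⟨k, hk⟩ := mem_zmultiples_iff.mp hnmem
  have hdvd : a ∣ (n : ℤ) := ⟨k, by rw [← hk, smul_eq_mul, mul_comm]⟩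
  have hdn : a.natAbs ∣ n := by simpa using Int.natAbs_dvd_natAbs.mpr hdvd
  have ha0 : a ≠ 0 := by
    rintro rfl
    simp at hdvd
    omega
  refine ⟨a.natAbs, hdn, Int.natAbs_pos.mpr ha0, ?_⟩
  have hsurj : Function.Surjective f := ZMod.intCast_surjective
  have h1 : H = (H.comap f).map f :=
    (AddSubgroup.map_comap_eq_self_of_surjective hsurj H).symm
  rw [h1, ha, hcl, AddMonoidHom.map_zmultiples]
  have h2 : f a = ((a.natAbs : ℕ) : ZMod n) ∨ f a = -((a.natAbs : ℕ) : ZMod n) := by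
    rw [hf]; simp only [Int.coe_castAddHom]
    rcases Int.natAbs_eq a with h | h
    · left; conv_lhs => rw [h]
      exact Int.cast_natCast _
    · right; conv_lhs => rw [h]
      rw [Int.cast_neg, Int.cast_natCast]
  rcases h2 with h | h
  · rw [h]
  · rw [h]
    ext x
    simp only [mem_zmultiples_iff]
    constructor
    · rintro ⟨k, rfl⟩; exact ⟨-k, by simp⟩
    · rintro ⟨k, rfl⟩; exact ⟨-k, by simp⟩

theorem card_zmultiples_coe (hn : 0 < n) {d : ℕ} (hd : d ∣ n) (hd0 : 0 < d) :
    Nat.card (zmultiples ((d : ℕ) : ZMod n)) = n / d := by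
  rw [Nat.card_zmultiples, ZMod.addOrderOf_coe d hn.ne', Nat.gcd_eq_right hd]

/-- The sum of the cardinalities of all additive subgroups of `ZMod n` is `σ₁(n)`. -/
theorem sum_card_addSubgroups (hn : 0 < n) :
    ∑ᶠ A : AddSubgroup (ZMod n), Nat.card A = ArithmeticFunction.sigma 1 n := by
  haveI : NeZero n := ⟨hn.ne'⟩
  haveI : Fintype (AddSubgroup (ZMod n)) := Fintype.ofFinite _
  rw [finsum_eq_sum_of_fintype, ArithmeticFunction.sigma_one_apply,
    ← Nat.sum_div_divisors n (fun d => d)]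
  refine Finset.sum_nbij' (fun A => n / Nat.card A)
    (fun d => zmultiples ((d : ℕ) : ZMod n)) ?_ ?_ ?_ ?_ ?_
  · intro A _
    obtain ⟨d, hd, hd0, rfl⟩ := zmod_addSubgroup hn A
    rw [card_zmultiples_coe hn hd hd0, Nat.div_div_self hd hn.ne']
    exact Nat.mem_divisors.mpr ⟨hd, hn.ne'⟩
  · intro d _
    exact Finset.mem_univ _
  · intro A _
    obtain ⟨d, hd, hd0, rfl⟩ := zmod_addSubgroup hn A
    rw [card_zmultiples_coe hn hd hd0, Nat.div_div_self hd hn.ne']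
  · intro d hd
    have hd0 : 0 < d := Nat.pos_of_mem_divisors hd
    rw [Nat.mem_divisors] at hd
    rw [card_zmultiples_coe hn hd.1 hd0, Nat.div_div_self hd.1 hn.ne']
  · intro A _
    obtain ⟨d, hd, hd0, rfl⟩ := zmod_addSubgroup hn A
    rw [card_zmultiples_coe hn hd hd0, Nat.div_div_self hd hn.ne']

section Dihedral

variable {n : ℕ}

/-- The subgroup of rotations coming from an additive subgroup of `ZMod n`. -/
def rsub (A : AddSubgroup (ZMod n)) : Subgroup (DihedralGroup n) where
  carrier := {x | ∃ i ∈ A, x = DihedralGroup.r i}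
  one_mem' := ⟨0, A.zero_mem, rfl⟩
  mul_mem' := by
    rintro _ _ ⟨i, hi, rfl⟩ ⟨j, hj, rfl⟩
    exact ⟨i + j, A.add_mem hi hj, rfl⟩
  inv_mem' := by
    rintro _ ⟨i, hi, rfl⟩
    exact ⟨-i, A.neg_mem hi, rfl⟩

@[simp] theorem r_mem_rsub {A : AddSubgroup (ZMod n)} {i : ZMod n} :
    DihedralGroup.r i ∈ rsub A ↔ i ∈ A := by
  constructor
  · rintro ⟨j, hj, h⟩
    obtain rfl : j = i := by injection h with h; exact h.symm
    exact hj
  · exact fun h => ⟨i, h, rfl⟩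

@[simp] theorem sr_not_mem_rsub {A : AddSubgroup (ZMod n)} {i : ZMod n} :
    DihedralGroup.sr i ∉ rsub A := by
  rintro ⟨j, hj, h⟩
  cases h

theorem rsub_injective : Function.Injective (rsub (n := n)) := by
  intro A B h
  ext i
  rw [← r_mem_rsub (A := A), ← r_mem_rsub (A := B), h]

theorem rsub_normal (A : AddSubgroup (ZMod n)) : (rsub A).Normal := by
  constructor
  rintro _ ⟨i, hi, rfl⟩ g
  cases g with
  | r j =>
    have : DihedralGroup.r j * DihedralGroup.r i * (DihedralGroup.r j)⁻¹ =
        DihedralGroup.r i := by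
      show DihedralGroup.r j * DihedralGroup.r i * DihedralGroup.r (-j) = _
      simp only [DihedralGroup.r_mul_r]
      ring_nf
    rw [this]; exact ⟨i, hi, rfl⟩
  | sr j =>
    have : DihedralGroup.sr j * DihedralGroup.r i * (DihedralGroup.sr j)⁻¹ =
        DihedralGroup.r (-i) := by
      show DihedralGroup.sr j * DihedralGroup.r i * DihedralGroup.sr j = _
      simp only [DihedralGroup.sr_mul_r, DihedralGroup.sr_mul_sr]
      ring_nf
    rw [this]; exact ⟨-i, A.neg_mem hi, rfl⟩

theorem card_rsub (A : AddSubgroup (ZMod n)) : Nat.card (rsub A) = Nat.card A := by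
  symm
  apply Nat.card_congr
  refine Equiv.ofBijective (fun i => ⟨DihedralGroup.r i, i, i.2, rfl⟩) ⟨?_, ?_⟩
  · intro i j h
    simp only [Subtype.mk_eq_mk] at h
    exact Subtype.ext (by injection h with h1; injection h1)
  · rintro ⟨_, i, hi, rfl⟩
    exact ⟨⟨i, hi⟩, rfl⟩

/-- The subgroup of even rotations. -/
def Ev (n : ℕ) : AddSubgroup (ZMod n) := zmultiples (2 : ZMod n)

theorem mem_Ev [NeZero n] {x : ZMod n} : x ∈ Ev n ↔ ∃ j : ZMod n, 2 * j = x := by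
  constructor
  · rintro ⟨k, rfl⟩
    refine ⟨(k : ZMod n), ?_⟩
    show _ = k • (2 : ZMod n)
    rw [zsmul_eq_mul]; ring
  · rintro ⟨j, rfl⟩
    refine ⟨(j.val : ℤ), ?_⟩
    show ((j.val : ℤ)) • (2 : ZMod n) = 2 * j
    rw [zsmul_eq_mul]
    push_cast
    simp [ZMod.natCast_val, ZMod.cast_id]
    ring

theorem card_Ev (hn : 0 < n) (heven : Even n) : Nat.card (Ev n) = n / 2 := by
  have h2 : ((2 : ℕ) : ZMod n) = (2 : ZMod n) := by push_cast; rfl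
  have : Ev n = zmultiples (((2 : ℕ) : ZMod n)) := by rw [h2]; rfl
  rw [this, card_zmultiples_coe hn heven.two_dvd (by norm_num)]

theorem one_not_mem_Ev (hn : 0 < n) (heven : Even n) : (1 : ZMod n) ∉ Ev n := by
  haveI : NeZero n := ⟨hn.ne'⟩
  rw [mem_Ev]
  rintro ⟨j, hj⟩
  have h2n : (2 : ℕ) ∣ n := heven.two_dvd
  have hn2 : ((n / 2 : ℕ) : ZMod n) = 0 := by
    have hmul : ((n / 2 : ℕ) : ZMod n) = ((n / 2 : ℕ) : ZMod n) * (2 * j) := by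
      rw [hj, mul_one]
    have h0 : ((n / 2 : ℕ) : ZMod n) * 2 = 0 := by
      rw [show (2 : ZMod n) = ((2 : ℕ) : ZMod n) by push_cast; rfl, ← Nat.cast_mul,
        Nat.div_mul_cancel h2n, ZMod.natCast_self]
    rw [hmul, ← mul_assoc, h0, zero_mul]
  rw [ZMod.natCast_eq_zero_iff] at hn2
  have hlt : n / 2 < n := Nat.div_lt_self hn (by norm_num)
  have h2le : 2 ≤ n := Nat.le_of_dvd hn h2n
  have hpos : 0 < n / 2 := Nat.div_pos h2le (by norm_num)
  exact absurd (Nat.le_of_dvd hpos hn2) (by omega)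

theorem Ev_dichotomy (hn : 0 < n) (i : ZMod n) : i ∈ Ev n ∨ i - 1 ∈ Ev n := by
  haveI : NeZero n := ⟨hn.ne'⟩
  have hi : ((i.val : ℕ) : ZMod n) = i := by simp [ZMod.natCast_val, ZMod.cast_id]
  rcases Nat.even_or_odd i.val with ⟨k, hk⟩ | ⟨k, hk⟩
  · left
    rw [mem_Ev]
    exact ⟨(k : ZMod n), by rw [← hi, hk]; push_cast; ring⟩
  · right
    rw [mem_Ev]
    exact ⟨(k : ZMod n), by rw [← hi, hk]; push_cast; ring⟩

theorem not_mem_Ev_sub (hn : 0 < n) {a c : ZMod n} (ha : a ∉ Ev n) (hc : c ∉ Ev n) :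
    a - c ∈ Ev n := by
  have ha1 : a - 1 ∈ Ev n := (Ev_dichotomy hn a).resolve_left ha
  have hc1 : c - 1 ∈ Ev n := (Ev_dichotomy hn c).resolve_left hc
  have : a - c = (a - 1) - (c - 1) := by ring
  rw [this]
  exact (Ev n).sub_mem ha1 hc1

/-- The two index-two dihedral subgroups (for `b = 0, 1`). -/
def hsub (n : ℕ) (b : ZMod n) : Subgroup (DihedralGroup n) where
  carrier := {x | match x with
    | DihedralGroup.r i => i ∈ Ev n
    | DihedralGroup.sr i => i - b ∈ Ev n}
  one_mem' := (Ev n).zero_mem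
  mul_mem' := by
    rintro (i | i) (j | j) hi hj
    · exact (Ev n).add_mem hi hj
    · show (j - i) - b ∈ Ev n
      have : (j - i) - b = (j - b) - i := by ring
      rw [this]; exact (Ev n).sub_mem hj hi
    · show (i + j) - b ∈ Ev n
      have : (i + j) - b = (i - b) + j := by ring
      rw [this]; exact (Ev n).add_mem hi hj
    · show (j - i) ∈ Ev n
      have : j - i = (j - b) - (i - b) := by ring
      rw [this]; exact (Ev n).sub_mem hj hi
  inv_mem' := by
    rintro (i | i) hi
    · exact (Ev n).neg_mem hi
    · exact hi

@[simp] theorem r_mem_hsub {b i : ZMod n} :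
    DihedralGroup.r i ∈ hsub n b ↔ i ∈ Ev n := Iff.rfl

@[simp] theorem sr_mem_hsub {b i : ZMod n} :
    DihedralGroup.sr i ∈ hsub n b ↔ i - b ∈ Ev n := Iff.rfl

theorem two_mul_mem_Ev [NeZero n] (j : ZMod n) : 2 * j ∈ Ev n := mem_Ev.mpr ⟨j, rfl⟩

theorem hsub_normal (hn : 0 < n) (b : ZMod n) : (hsub n b).Normal := by
  haveI : NeZero n := ⟨hn.ne'⟩
  constructor
  rintro (i | i) hi (j | j)
  · show DihedralGroup.r j * DihedralGroup.r i * DihedralGroup.r (-j) ∈ _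
    simp only [DihedralGroup.r_mul_r, r_mem_hsub]
    have : j + i + -j = i := by ring
    rw [this]; exact hi
  · show DihedralGroup.sr j * DihedralGroup.r i * DihedralGroup.sr j ∈ _
    simp only [DihedralGroup.sr_mul_r, DihedralGroup.sr_mul_sr, r_mem_hsub]
    have : j - (j + i) = -i := by ring
    rw [this]; exact (Ev n).neg_mem hi
  · show DihedralGroup.r j * DihedralGroup.sr i * DihedralGroup.r (-j) ∈ _
    simp only [DihedralGroup.r_mul_sr, DihedralGroup.sr_mul_r, sr_mem_hsub]
    have : i - j + -j - b = (i - b) - 2 * j := by ring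
    rw [this]
    exact (Ev n).sub_mem hi (two_mul_mem_Ev j)
  · show DihedralGroup.sr j * DihedralGroup.sr i * DihedralGroup.sr j ∈ _
    simp only [DihedralGroup.sr_mul_sr, DihedralGroup.r_mul_sr, sr_mem_hsub]
    have : j - (i - j) - b = 2 * (j - b) - (i - b) := by ring
    rw [this]
    exact (Ev n).sub_mem (two_mul_mem_Ev _) hi

theorem card_hsub (hn : 0 < n) (heven : Even n) (b : ZMod n) :
    Nat.card (hsub n b) = n := by
  haveI : NeZero n := ⟨hn.ne'⟩
  have he : Nat.card (Ev n) = n / 2 := card_Ev hn heven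
  have hcongr : Nat.card (hsub n b) = Nat.card ((Ev n) ⊕ (Ev n)) := by
    apply Nat.card_congr
    refine Equiv.symm (Equiv.ofBijective (fun x => match x with
      | Sum.inl e => ⟨DihedralGroup.r e, e.2⟩
      | Sum.inr e => ⟨DihedralGroup.sr (b + e), by
          simp only [sr_mem_hsub]
          have : b + (e : ZMod n) - b = e := by ring
          rw [this]; exact e.2⟩) ⟨?_, ?_⟩)
    · rintro (e | e) (f | f) h <;> simp only [Subtype.mk_eq_mk] at h
      · exact congrArg Sum.inl (Subtype.ext (by injection h with h; injection h))
      · cases h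
      · cases h
      · exact congrArg Sum.inr (Subtype.ext (add_left_cancel
          (a := b) (by injection h with h)))
    · rintro ⟨(i | i), hx⟩
      · exact ⟨Sum.inl ⟨i, hx⟩, rfl⟩
      · refine ⟨Sum.inr ⟨i - b, hx⟩, ?_⟩
        simp only [Subtype.mk_eq_mk]
        congr 1
        ring
  rw [hcongr, Nat.card_sum, he]
  have h2 : 2 ∣ n := heven.two_dvd
  omega

theorem sr_shift [NeZero n] {N : Subgroup (DihedralGroup n)} (hN : N.Normal) {i e : ZMod n}
    (hx : DihedralGroup.sr i ∈ N) (he : e ∈ Ev n) :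
    DihedralGroup.sr (i + e) ∈ N := by
  obtain ⟨j, rfl⟩ := mem_Ev.mp he
  have h := hN.conj_mem _ hx (DihedralGroup.r (-j))
  have heq : DihedralGroup.r (-j) * DihedralGroup.sr i * (DihedralGroup.r (-j))⁻¹ =
      DihedralGroup.sr (i + 2 * j) := by
    show DihedralGroup.r (-j) * DihedralGroup.sr i * DihedralGroup.r (-(-j)) = _
    simp only [DihedralGroup.r_mul_sr, DihedralGroup.sr_mul_r]
    congr 1; ring
  rwa [heq] at h

theorem hsub_le [NeZero n] {N : Subgroup (DihedralGroup n)} (hN : N.Normal) {i b : ZMod n}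
    (hx : DihedralGroup.sr i ∈ N) (hib : i - b ∈ Ev n) : hsub n b ≤ N := by
  have hsr : ∀ e ∈ Ev n, DihedralGroup.sr (b + e) ∈ N := by
    intro e he
    have heq : b + e = i + (e - (i - b)) := by ring
    rw [heq]
    exact sr_shift hN hx ((Ev n).sub_mem he hib)
  rintro (a | a) ha
  · have h1 : DihedralGroup.sr (i + a) ∈ N := sr_shift hN hx ha
    have heq : DihedralGroup.r a = DihedralGroup.sr i * DihedralGroup.sr (i + a) := by
      simp only [DihedralGroup.sr_mul_sr]; congr 1; ring
    rw [heq]; exact N.mul_mem hx h1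
  · have heq : a = b + (a - b) := by ring
    rw [heq]; exact hsr _ ha

theorem eq_top_of (hn : 0 < n) {N : Subgroup (DihedralGroup n)} {b j : ZMod n}
    (hle : hsub n b ≤ N) (hj : DihedralGroup.r j ∈ N) (hjE : j ∉ Ev n) : N = ⊤ := by
  rw [eq_top_iff]
  rintro (a | a) _
  · by_cases ha : a ∈ Ev n
    · exact hle (r_mem_hsub.mpr ha)
    · have h1 : DihedralGroup.r (a - j) ∈ N := hle (r_mem_hsub.mpr (not_mem_Ev_sub hn ha hjE))
      have heq : DihedralGroup.r a = DihedralGroup.r (a - j) * DihedralGroup.r j := by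
        simp only [DihedralGroup.r_mul_r]; congr 1; ring
      rw [heq]; exact N.mul_mem h1 hj
  · by_cases ha : a - b ∈ Ev n
    · exact hle (sr_mem_hsub.mpr ha)
    · have h2 : (a - j) - b ∈ Ev n := by
        have h3 := not_mem_Ev_sub hn ha hjE
        have heq : (a - j) - b = (a - b) - j := by ring
        rw [heq]; exact h3
      have h1 : DihedralGroup.sr (a - j) ∈ N := hle (sr_mem_hsub.mpr h2)
      have heq : DihedralGroup.sr a = DihedralGroup.sr (a - j) * DihedralGroup.r j := by
        simp only [DihedralGroup.sr_mul_r]; congr 1; ring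
      rw [heq]; exact N.mul_mem h1 hj

theorem classify_aux (hn : 0 < n) {N : Subgroup (DihedralGroup n)} (hN : N.Normal)
    {i b : ZMod n} (hxN : DihedralGroup.sr i ∈ N) (hib : i - b ∈ Ev n) :
    N = hsub n b ∨ N = ⊤ := by
  haveI : NeZero n := ⟨hn.ne'⟩
  have hle := hsub_le hN hxN hib
  by_cases htop : N ≤ hsub n b
  · left; exact le_antisymm htop hle
  · right
    rw [SetLike.not_le_iff_exists] at htop
    obtain ⟨y, hyN, hy⟩ := htop
    cases y with
    | r j => exact eq_top_of hn hle hyN (by simpa using hy)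
    | sr j =>
      have hj : j - b ∉ Ev n := by simpa using hy
      have hji : j - i ∉ Ev n := fun h => hj (by
        have heq : j - b = (j - i) + (i - b) := by ring
        rw [heq]; exact (Ev n).add_mem h hib)
      have hmem : DihedralGroup.r (j - i) ∈ N := by
        have heq : DihedralGroup.r (j - i) = DihedralGroup.sr i * DihedralGroup.sr j := by
          simp only [DihedralGroup.sr_mul_sr]
        rw [heq]; exact N.mul_mem hxN hyN
      exact eq_top_of hn hle hmem hji

theorem normal_classification (hn : 0 < n) {N : Subgroup (DihedralGroup n)} (hN : N.Normal) :
    (∃ A, N = rsub A) ∨ N = hsub n 0 ∨ N = hsub n 1 ∨ N = ⊤ := by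
  haveI : NeZero n := ⟨hn.ne'⟩
  by_cases hrot : ∀ x ∈ N, ∃ i, x = DihedralGroup.r i
  · left
    refine ⟨{ carrier := {i | DihedralGroup.r i ∈ N}
              zero_mem' := by
                show DihedralGroup.r 0 ∈ N
                rw [← DihedralGroup.one_def]; exact N.one_mem
              add_mem' := by
                intro a b ha hb
                show DihedralGroup.r (a + b) ∈ N
                rw [← DihedralGroup.r_mul_r]
                exact N.mul_mem ha hb
              neg_mem' := by
                intro a ha
                show DihedralGroup.r (-a) ∈ N
                exact N.inv_mem ha }, ?_⟩
    ext x
    cases x with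
    | r i => simp only [r_mem_rsub]; exact Iff.rfl
    | sr i =>
      simp only [sr_not_mem_rsub, iff_false]
      intro h
      obtain ⟨j, hj⟩ := hrot _ h
      cases hj
  · push_neg at hrot
    obtain ⟨x, hxN, hx⟩ := hrot
    obtain ⟨i, rfl⟩ : ∃ i, x = DihedralGroup.sr i := by
      cases x with
      | r i => exact absurd rfl (hx i)
      | sr i => exact ⟨i, rfl⟩
    obtain hb | hb := Ev_dichotomy hn i
    · have := classify_aux hn hN hxN (b := 0) (by simpa using hb)
      tauto
    · have := classify_aux hn hN hxN (b := 1) hb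
      tauto

theorem sr_mem_hsub_self (b : ZMod n) : DihedralGroup.sr b ∈ hsub n b := by
  rw [sr_mem_hsub, sub_self]
  exact (Ev n).zero_mem

theorem rsub_ne_hsub (A : AddSubgroup (ZMod n)) (b : ZMod n) : rsub A ≠ hsub n b := by
  intro h
  exact sr_not_mem_rsub (h ▸ sr_mem_hsub_self b)

theorem rsub_ne_top (A : AddSubgroup (ZMod n)) : rsub A ≠ (⊤ : Subgroup (DihedralGroup n)) := by
  intro h
  exact sr_not_mem_rsub (i := (0 : ZMod n)) (h ▸ Subgroup.mem_top _)

theorem hsub_zero_ne_one (hn : 0 < n) (heven : Even n) : hsub n 0 ≠ hsub n 1 := by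
  intro h
  have h0 : DihedralGroup.sr 0 ∈ hsub n 1 := h ▸ sr_mem_hsub_self 0
  rw [sr_mem_hsub] at h0
  have : (1 : ZMod n) ∈ Ev n := by
    have := (Ev n).neg_mem h0
    simpa using this
  exact one_not_mem_Ev hn heven this

theorem hsub_ne_top (hn : 0 < n) (heven : Even n) (b : ZMod n) :
    hsub n b ≠ (⊤ : Subgroup (DihedralGroup n)) := by
  intro h
  have h0 : DihedralGroup.sr (b + 1) ∈ hsub n b := h ▸ Subgroup.mem_top _
  rw [sr_mem_hsub] at h0
  have : (1 : ZMod n) ∈ Ev n := by simpa using h0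
  exact one_not_mem_Ev hn heven this

theorem normal_set_eq (hn : 0 < n) :
    {N : Subgroup (DihedralGroup n) | N.Normal} =
      Set.range rsub ∪ {hsub n 0, hsub n 1, (⊤ : Subgroup (DihedralGroup n))} := by
  ext N
  simp only [Set.mem_setOf_eq, Set.mem_union, Set.mem_range, Set.mem_insert_iff,
    Set.mem_singleton_iff]
  constructor
  · intro hN
    rcases normal_classification hn hN with ⟨A, rfl⟩ | h | h | h
    · exact Or.inl ⟨A, rfl⟩
    · exact Or.inr (Or.inl h)
    · exact Or.inr (Or.inr (Or.inl h))
    · exact Or.inr (Or.inr (Or.inr h))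
  · rintro (⟨A, rfl⟩ | rfl | rfl | rfl)
    · exact rsub_normal A
    · exact hsub_normal hn 0
    · exact hsub_normal hn 1
    · infer_instance

end Dihedral

end DihedralAux


theorem D_dihedral_even (n : ℕ) (hn : 0 < n) (heven : Even n) :
    D (DihedralGroup n) = ArithmeticFunction.sigma 1 n + 4 * n ∧
    D (DihedralGroup n) ≠ 2 * (2 * n) ∧
    D (DihedralGroup n) ≠ 2 * (2 * n) + 1 ∧
    D (DihedralGroup n) ≠ 2 * (2 * n) - 1 := by
  haveI : NeZero n := ⟨hn.ne'⟩
  have h2n : 2 ≤ n := Nat.le_of_dvd hn heven.two_dvd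
  open DihedralAux in
  have hD : D (DihedralGroup n) = ArithmeticFunction.sigma 1 n + 4 * n := by
    rw [D, normal_set_eq hn]
    have hdisj : Disjoint (Set.range (rsub (n := n)))
        ({hsub n 0, hsub n 1, (⊤ : Subgroup (DihedralGroup n))} : Set _) := by
      rw [Set.disjoint_left]
      rintro _ ⟨A, rfl⟩ (h | h | h)
      · exact rsub_ne_hsub A 0 h
      · exact rsub_ne_hsub A 1 h
      · exact rsub_ne_top A h
    rw [finsum_mem_union hdisj (Set.toFinite _) (Set.toFinite _)]
    have hpart1 : (∑ᶠ N ∈ Set.range (rsub (n := n)), Nat.card N) =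
        ArithmeticFunction.sigma 1 n := by
      rw [finsum_mem_range rsub_injective]
      rw [← sum_card_addSubgroups hn]
      exact finsum_congr fun A => card_rsub A
    have hpart2 : (∑ᶠ N ∈ ({hsub n 0, hsub n 1, (⊤ : Subgroup (DihedralGroup n))} : Set _),
        Nat.card N) = 4 * n := by
      rw [finsum_mem_insert _ (by
            simp only [Set.mem_insert_iff, Set.mem_singleton_iff]
            push_neg
            exact ⟨hsub_zero_ne_one hn heven, hsub_ne_top hn heven 0⟩)
          (Set.toFinite _),
        finsum_mem_pair (hsub_ne_top hn heven 1)]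
      rw [card_hsub hn heven, card_hsub hn heven, Subgroup.card_top,
        DihedralGroup.nat_card]
      ring
    rw [hpart1, hpart2]
  have hσ : n + 1 ≤ ArithmeticFunction.sigma 1 n := by
    rw [ArithmeticFunction.sigma_one_apply]
    have hsub : ({1, n} : Finset ℕ) ⊆ n.divisors := by
      intro x hx
      simp only [Finset.mem_insert, Finset.mem_singleton] at hx
      rw [Nat.mem_divisors]
      rcases hx with rfl | rfl
      · exact ⟨one_dvd _, hn.ne'⟩
      · exact ⟨dvd_rfl, hn.ne'⟩
    calc n + 1 = ∑ d ∈ ({1, n} : Finset ℕ), d := by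
          rw [Finset.sum_pair (by omega : (1 : ℕ) ≠ n)]; omega
      _ ≤ ∑ d ∈ n.divisors, d := Finset.sum_le_sum_of_subset hsub
  refine ⟨hD, ?_, ?_, ?_⟩ <;> rw [hD] <;> omega
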